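/- Let (Ω, 𝔉, P) be a probability space admitting a countable measurable partition {A_n : n = 1, 2, 3, …} of Ω with P(A_n) > 0 for every n. Set M = span_{L⁰}{Ĩ_{A_n} : n ∈ ℕ} ⊆ L⁰ = L⁰(𝔉,ℝ), U_ε = M + B_ε for ε ∈ L⁰₊₊, and let 𝒯 be the topology on L⁰ in which V is open iff for every y ∈ V there is ε ∈ L⁰₊₊ with y + U_ε ⊆ V. Then 𝒯 is not induced by any family of L⁰-seminorms on L⁰. -/

import Mathlib

noncomputable section

open MeasureTheory Set Pointwise Filter Topology

namespace PaperL0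

variable {Ω : Type*} [MeasurableSpace Ω]

instance commRingL0 (μ : Measure Ω) : CommRing (Ω →ₘ[μ] ℝ) :=
  { (inferInstance : AddCommGroup (Ω →ₘ[μ] ℝ)),
    (inferInstance : CommMonoid (Ω →ₘ[μ] ℝ)) with
    left_distrib := fun f g h => MeasureTheory.AEEqFun.toGerm_injective <| by
      simp [MeasureTheory.AEEqFun.mul_toGerm, MeasureTheory.AEEqFun.add_toGerm, mul_add]
    right_distrib := fun f g h => MeasureTheory.AEEqFun.toGerm_injective <| by
      simp [MeasureTheory.AEEqFun.mul_toGerm, MeasureTheory.AEEqFun.add_toGerm, add_mul]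
    zero_mul := fun f => MeasureTheory.AEEqFun.toGerm_injective <| by
      simp [MeasureTheory.AEEqFun.mul_toGerm, MeasureTheory.AEEqFun.zero_toGerm]
    mul_zero := fun f => MeasureTheory.AEEqFun.toGerm_injective <| by
      simp [MeasureTheory.AEEqFun.mul_toGerm, MeasureTheory.AEEqFun.zero_toGerm] }

variable (μ : Measure Ω)

/-- `L⁰₊`, the set of nonnegative elements of `L⁰`. -/
def Lpos : Set (Ω →ₘ[μ] ℝ) := {ξ | 0 ≤ ξ}

/-- `L⁰₊₊`, the set of elements of `L⁰` which are `> 0` a.e. on `Ω`. -/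
def Lspos : Set (Ω →ₘ[μ] ℝ) := {ξ | ∀ᵐ ω ∂μ, 0 < ξ ω}

/-- The absolute value `|ξ|` of an element of `L⁰`. -/
def aabs {μ : Measure Ω} (ξ : Ω →ₘ[μ] ℝ) : Ω →ₘ[μ] ℝ := ξ ⊔ -ξ

/-- `B_ε = {ξ ∈ L⁰ : |ξ| ≤ ε}`. -/
def ball (ε : Ω →ₘ[μ] ℝ) : Set (Ω →ₘ[μ] ℝ) := {ξ | aabs ξ ≤ ε}

open Classical in
/-- `Ĩ_A`, the equivalence class of the indicator function of a (measurable) set `A`. -/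
def ind (A : Set Ω) : Ω →ₘ[μ] ℝ :=
  if h : MeasurableSet A then
    AEEqFun.mk (A.indicator fun _ => (1 : ℝ))
      ((measurable_const.indicator h).aestronglyMeasurable)
  else 0

/-- A countable measurable partition of `Ω`. -/
def IsMeasPartition (A : ℕ → Set Ω) : Prop :=
  (∀ n, MeasurableSet (A n)) ∧ Pairwise (Function.onFun Disjoint A) ∧ (⋃ n, A n) = Set.univ

variable {E : Type*} [AddCommGroup E] [Module (Ω →ₘ[μ] ℝ) E]

/-- `L⁰`-convexity of a subset of an `L⁰`-module. -/
def IsL0Convex (U : Set E) : Prop :=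
  ∀ x ∈ U, ∀ y ∈ U, ∀ ξ : Ω →ₘ[μ] ℝ, 0 ≤ ξ → ξ ≤ 1 → ξ • x + (1 - ξ) • y ∈ U

/-- `L⁰`-absorbency of a subset of an `L⁰`-module. -/
def IsL0Absorbent (U : Set E) : Prop := ∀ x : E, ∃ ξ ∈ Lspos μ, x ∈ ξ • U

/-- `L⁰`-balancedness of a subset of an `L⁰`-module. -/
def IsL0Balanced (U : Set E) : Prop :=
  ∀ x ∈ U, ∀ ξ : Ω →ₘ[μ] ℝ, aabs ξ ≤ 1 → ξ • x ∈ U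

/-- An `L⁰`-seminorm on an `L⁰`-module. -/
structure IsL0Seminorm (p : E → Ω →ₘ[μ] ℝ) : Prop where
  nonneg : ∀ x, 0 ≤ p x
  homog : ∀ (ξ : Ω →ₘ[μ] ℝ) (x : E), p (ξ • x) = aabs ξ * p x
  triangle : ∀ x y, p (x + y) ≤ p x + p y

/-- The countable concatenation property for a subset of an `L⁰`-module. -/
def HasCCP (G : Set E) : Prop :=
  ∀ x : ℕ → E, (∀ n, x n ∈ G) → ∀ A : ℕ → Set Ω, IsMeasPartition A →
    (∃ y : E, ∀ n, ind μ (A n) • y = ind μ (A n) • x n) ∧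
      ∀ y : E, (∀ n, ind μ (A n) • y = ind μ (A n) • x n) → y ∈ G

/-- The relative countable concatenation property for a subset of an `L⁰`-module. -/
def HasRelCCP (G : Set E) : Prop :=
  ∀ x : ℕ → E, (∀ n, x n ∈ G) → ∀ A : ℕ → Set Ω, IsMeasPartition A →
    ∀ y : E, (∀ n, ind μ (A n) • y = ind μ (A n) • x n) → y ∈ G

/-- A `P`-atom of a measure. -/
def IsPAtom (A : Set Ω) : Prop :=
  MeasurableSet A ∧ 0 < μ A ∧ ∀ B, MeasurableSet B → B ⊆ A → μ B = 0 ∨ μ B = μ A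

end PaperL0

open PaperL0

namespace PaperL0
variable {Ω : Type*} [MeasurableSpace Ω] {μ : Measure Ω}

lemma aabs_coeFn (ξ : Ω →ₘ[μ] ℝ) : ⇑(aabs ξ) =ᵐ[μ] fun ω => |ξ ω| := by
  unfold aabs
  filter_upwards [MeasureTheory.AEEqFun.coeFn_sup ξ (-ξ),
    MeasureTheory.AEEqFun.coeFn_neg ξ] with ω h1 h2
  rw [h1, h2]; simp [abs]

lemma le_iff_ae {f g : Ω →ₘ[μ] ℝ} : f ≤ g ↔ ∀ᵐ ω ∂μ, f ω ≤ g ω :=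
  MeasureTheory.AEEqFun.coeFn_le.symm

lemma ind_coeFn {A : Set Ω} (h : MeasurableSet A) :
    ⇑(ind μ A) =ᵐ[μ] A.indicator (fun _ => (1:ℝ)) := by
  unfold ind
  rw [dif_pos h]
  exact MeasureTheory.AEEqFun.coeFn_mk _ _

lemma smul_eq_mul' (f g : Ω →ₘ[μ] ℝ) : f • g = f * g := rfl

lemma aabs_zero : aabs (0 : Ω →ₘ[μ] ℝ) = 0 := by
  apply MeasureTheory.AEEqFun.ext
  filter_upwards [aabs_coeFn (0 : Ω →ₘ[μ] ℝ),
    MeasureTheory.AEEqFun.coeFn_zero (β := ℝ) (μ := μ)] with ω h1 h2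
  rw [h1, h2]
  simp

lemma aabs_ind {A : Set Ω} (h : MeasurableSet A) : aabs (ind μ A) = ind μ A := by
  apply MeasureTheory.AEEqFun.ext
  filter_upwards [aabs_coeFn (ind μ A), ind_coeFn (μ := μ) h] with ω h1 h2
  rw [h1, h2]
  exact abs_of_nonneg (Set.indicator_nonneg (fun _ _ => zero_le_one) ω)

lemma ind_mul_ind {A B : Set Ω} (hA : MeasurableSet A) (hB : MeasurableSet B)
    (h : Disjoint A B) : ind μ A * ind μ B = 0 := by
  apply MeasureTheory.AEEqFun.ext
  filter_upwards [MeasureTheory.AEEqFun.coeFn_mul (ind μ A) (ind μ B),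
    ind_coeFn (μ := μ) hA, ind_coeFn (μ := μ) hB,
    MeasureTheory.AEEqFun.coeFn_zero (β := ℝ) (μ := μ)] with ω h1 h2 h3 h4
  rw [h1, Pi.mul_apply, h2, h3, h4]
  simp only [Set.indicator_apply, Pi.zero_apply]
  by_cases hωA : ω ∈ A
  · have : ω ∉ B := Set.disjoint_left.mp h hωA
    simp [hωA, this]
  · simp [hωA]

lemma zero_le_of_spos {ε : Ω →ₘ[μ] ℝ} (h : ε ∈ Lspos μ) : (0 : Ω →ₘ[μ] ℝ) ≤ ε := by
  rw [le_iff_ae]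
  filter_upwards [h, MeasureTheory.AEEqFun.coeFn_zero (β := ℝ) (μ := μ)] with ω h1 h2
  rw [h2]; exact le_of_lt h1

end PaperL0


/-- Remark 3.4: for any probability space admitting a countable measurable partition with
pieces of positive probability, the locally L⁰-convex topology on L⁰ with neighborhood base
{M + B_ε : ε ∈ L⁰₊₊}, where M = span_{L⁰}{Ĩ_{A_n}}, is not induced by any family of
L⁰-seminorms. -/
theorem statement15
    {Ω : Type*} [MeasurableSpace Ω] (P : Measure Ω) [IsProbabilityMeasure P]
    (A : ℕ → Set Ω) (hA : IsMeasPartition A) (hApos : ∀ n, 0 < P (A n))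
    (T : TopologicalSpace (Ω →ₘ[P] ℝ))
    (hT : ∀ V : Set (Ω →ₘ[P] ℝ), IsOpen[T] V ↔ ∀ y ∈ V, ∃ ε ∈ Lspos P,
      ∀ u ∈ ((Submodule.span (Ω →ₘ[P] ℝ) (Set.range fun n => ind P (A n)) :
          Submodule (Ω →ₘ[P] ℝ) (Ω →ₘ[P] ℝ)) : Set (Ω →ₘ[P] ℝ)) + ball P ε, y + u ∈ V) :
    ¬ ∃ Ps : Set ((Ω →ₘ[P] ℝ) → Ω →ₘ[P] ℝ), (∀ p ∈ Ps, IsL0Seminorm P p) ∧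
      ∀ V : Set (Ω →ₘ[P] ℝ), IsOpen[T] V ↔
        ∀ y ∈ V, ∃ Qs : Set ((Ω →ₘ[P] ℝ) → Ω →ₘ[P] ℝ), Qs.Finite ∧ Qs ⊆ Ps ∧
          ∃ ε ∈ Lspos P, ∀ u, (∀ p ∈ Qs, p u ≤ ε) → y + u ∈ V := by
  rintro ⟨Ps, hPs, hiff⟩
  classical
  obtain ⟨hAm, hAd, hAu⟩ := hA
  have hA1 : ∀ p ∈ Ps, ∀ n : ℕ, p (ind P (A n)) = 0 := by
    intro p hp n
    by_contra hne
    have hsem := hPs p hp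
    set η := p (ind P (A n)) with hηdef
    have hη0 : (0 : Ω →ₘ[P] ℝ) ≤ η := hsem.nonneg _
    have hp0 : p 0 = 0 := by
      have h := hsem.homog 0 0
      rwa [zero_smul, aabs_zero, zero_mul] at h
    set V : Set (Ω →ₘ[P] ℝ) := {u | ¬ (η ≤ p u + p u)} with hVdef
    have hopen : IsOpen[T] V := by
      rw [hiff]
      intro y hy
      have hy' : ¬ (η ≤ p y + p y) := hy
      have hex : ∃ k : ℕ, P {ω | 1/((k:ℝ)+1) ≤ η ω - (p y ω + p y ω)} ≠ 0 := by
        by_contra hno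
        push_neg at hno
        apply hy'
        rw [le_iff_ae]
        have hnull : P (⋃ k : ℕ, {ω | 1/((k:ℝ)+1) ≤ η ω - (p y ω + p y ω)}) = 0 :=
          measure_iUnion_null hno
        filter_upwards [measure_eq_zero_iff_ae_notMem.mp hnull,
          MeasureTheory.AEEqFun.coeFn_add (p y) (p y)] with ω hω hadd
        rw [hadd, Pi.add_apply]
        by_contra hlt
        push_neg at hlt
        obtain ⟨k, hk⟩ := exists_nat_one_div_lt (sub_pos.mpr hlt)
        exact hω (Set.mem_iUnion.mpr ⟨k, le_of_lt hk⟩)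
      obtain ⟨k, hS⟩ := hex
      clear hy hy'
      set δ : ℝ := 1/((k:ℝ)+1) with hδdef
      have hδ : 0 < δ := by positivity
      set g : Ω →ₘ[P] ℝ := η - (p y + p y) with hgdef
      set ε : Ω →ₘ[P] ℝ := (aabs g + MeasureTheory.AEEqFun.const Ω δ) *
        MeasureTheory.AEEqFun.const Ω (8⁻¹:ℝ) with hεdef
      have hεcoe : ∀ᵐ ω ∂P, ε ω = (|η ω - (p y ω + p y ω)| + δ) * 8⁻¹ := by
        filter_upwards [MeasureTheory.AEEqFun.coeFn_mul
            (aabs g + MeasureTheory.AEEqFun.const Ω δ) (MeasureTheory.AEEqFun.const Ω (8⁻¹:ℝ)),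
          MeasureTheory.AEEqFun.coeFn_add (aabs g) (MeasureTheory.AEEqFun.const Ω δ),
          aabs_coeFn g,
          MeasureTheory.AEEqFun.coeFn_sub η (p y + p y),
          MeasureTheory.AEEqFun.coeFn_add (p y) (p y),
          MeasureTheory.AEEqFun.coeFn_const (β := ℝ) (μ := P) Ω δ,
          MeasureTheory.AEEqFun.coeFn_const (β := ℝ) (μ := P) Ω (8⁻¹:ℝ)]
          with ω h1 h2 h3 h4 h5 h6 h7
        rw [hεdef]
        simp only [h1, h2, h3, h4, h5, h6, h7, Pi.mul_apply, Pi.add_apply, Pi.sub_apply,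
          Function.const_apply]
        rw [hgdef, h4, Pi.sub_apply, h5, Pi.add_apply]
      have hεpos : ε ∈ Lspos P := by
        filter_upwards [hεcoe] with ω h
        rw [h]
        nlinarith [abs_nonneg (η ω - (p y ω + p y ω))]
      refine ⟨{p}, Set.finite_singleton p, Set.singleton_subset_iff.mpr hp, ε, hεpos, ?_⟩
      intro u hu
      have hu' : p u ≤ ε := hu p rfl
      show ¬ (η ≤ p (y + u) + p (y + u))
      intro hcon
      apply hS
      refine measure_eq_zero_iff_ae_notMem.mpr ?_
      filter_upwards [le_iff_ae.mp hcon, le_iff_ae.mp (hsem.triangle y u), le_iff_ae.mp hu',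
        hεcoe, MeasureTheory.AEEqFun.coeFn_add (p (y + u)) (p (y + u)),
        MeasureTheory.AEEqFun.coeFn_add (p y) (p u)] with ω h1 h2 h3 h4 h5 h6
      intro hωS
      have hωS' : δ ≤ η ω - (p y ω + p y ω) := hωS
      simp only [h5, Pi.add_apply] at h1
      simp only [h6, Pi.add_apply] at h2
      rw [h4] at h3
      have habs : |η ω - (p y ω + p y ω)| = η ω - (p y ω + p y ω) :=
        abs_of_nonneg (le_trans hδ.le hωS')
      rw [habs] at h3
      linarith
    have h0V : (0 : Ω →ₘ[P] ℝ) ∈ V := by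
      show ¬ (η ≤ p 0 + p 0)
      rw [hp0, add_zero]
      intro hle
      exact hne (le_antisymm hle hη0)
    obtain ⟨ε', hε', hU⟩ := (hT V).mp hopen 0 h0V
    have hmem : ind P (A n) ∈ ((Submodule.span (Ω →ₘ[P] ℝ)
        (Set.range fun n => ind P (A n)) : Submodule (Ω →ₘ[P] ℝ) (Ω →ₘ[P] ℝ)) :
        Set (Ω →ₘ[P] ℝ)) + ball P ε' := by
      rw [Set.mem_add]
      refine ⟨ind P (A n), Submodule.subset_span ⟨n, rfl⟩, 0, ?_, add_zero _⟩
      show aabs 0 ≤ ε'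
      rw [aabs_zero]
      exact zero_le_of_spos hε'
    have hin := hU _ hmem
    rw [zero_add] at hin
    apply hin
    rw [le_iff_ae]
    filter_upwards [le_iff_ae.mp hη0, MeasureTheory.AEEqFun.coeFn_add η η,
      MeasureTheory.AEEqFun.coeFn_zero (β := ℝ) (μ := P)] with ω h1 h2 h3
    rw [h3, Pi.zero_apply] at h1
    rw [h2, Pi.add_apply]
    linarith
  have hA0 : ∀ p ∈ Ps, ∀ x : Ω →ₘ[P] ℝ, p x = 0 := by
    intro p hp x
    have hsem := hPs p hp
    have hmul : ∀ n : ℕ, ind P (A n) * p x = 0 := by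
      intro n
      have h1 := hsem.homog (ind P (A n)) x
      have h2 := hsem.homog x (ind P (A n))
      rw [hA1 p hp n, mul_zero] at h2
      have hc : ind P (A n) • x = x • ind P (A n) := by
        rw [smul_eq_mul', smul_eq_mul', mul_comm]
      rw [hc, h2, aabs_ind (hAm n)] at h1
      exact h1.symm
    apply MeasureTheory.AEEqFun.ext
    have hae : ∀ᵐ ω ∂P, ∀ n : ℕ, (A n).indicator (fun _ => (1:ℝ)) ω * p x ω = 0 := by
      rw [MeasureTheory.ae_all_iff]
      intro n
      have hcoe : ⇑(ind P (A n) * p x) = ⇑(0 : Ω →ₘ[P] ℝ) := by rw [hmul n]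
      filter_upwards [MeasureTheory.AEEqFun.coeFn_mul (ind P (A n)) (p x),
        ind_coeFn (hAm n), MeasureTheory.AEEqFun.coeFn_zero (β := ℝ) (μ := P)] with ω h1 h2 h3
      calc (A n).indicator (fun _ => (1:ℝ)) ω * p x ω
          = (ind P (A n)) ω * p x ω := by rw [h2]
        _ = (ind P (A n) * p x) ω := by rw [h1, Pi.mul_apply]
        _ = (0 : Ω →ₘ[P] ℝ) ω := congrFun hcoe ω
        _ = 0 := by rw [h3, Pi.zero_apply]
    filter_upwards [hae, MeasureTheory.AEEqFun.coeFn_zero (β := ℝ) (μ := P)] with ω h1 h2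
    obtain ⟨m, hm⟩ : ∃ m, ω ∈ A m := Set.mem_iUnion.mp (hAu.symm ▸ Set.mem_univ ω)
    have h3 := h1 m
    rw [Set.indicator_of_mem hm, one_mul] at h3
    rw [h2, Pi.zero_apply, h3]
  -- Step B
  set V2 : Set (Ω →ₘ[P] ℝ) := {v | ∃ m ∈ (Submodule.span (Ω →ₘ[P] ℝ)
      (Set.range fun n => ind P (A n)) : Submodule (Ω →ₘ[P] ℝ) (Ω →ₘ[P] ℝ)),
      ∃ b : Ω →ₘ[P] ℝ, (∀ᵐ ω ∂P, |b ω| < 1) ∧ v = m + b} with hV2def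
  have hopen2 : IsOpen[T] V2 := by
    rw [hT]
    rintro y ⟨m, hm, b, hb, rfl⟩
    set ε : Ω →ₘ[P] ℝ := ((1 : Ω →ₘ[P] ℝ) - aabs b) * MeasureTheory.AEEqFun.const Ω (2⁻¹:ℝ)
      with hεdef
    have hεcoe : ∀ᵐ ω ∂P, ε ω = (1 - |b ω|) * 2⁻¹ := by
      filter_upwards [MeasureTheory.AEEqFun.coeFn_mul ((1 : Ω →ₘ[P] ℝ) - aabs b)
          (MeasureTheory.AEEqFun.const Ω (2⁻¹:ℝ)),
        MeasureTheory.AEEqFun.coeFn_sub (1 : Ω →ₘ[P] ℝ) (aabs b),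
        MeasureTheory.AEEqFun.coeFn_one (β := ℝ) (μ := P),
        aabs_coeFn b,
        MeasureTheory.AEEqFun.coeFn_const (β := ℝ) (μ := P) Ω (2⁻¹:ℝ)] with ω h1 h2 h3 h4 h5
      rw [hεdef]
      simp only [h1, h2, h3, h4, h5, Pi.mul_apply, Pi.sub_apply, Pi.one_apply,
        Function.const_apply]
    refine ⟨ε, ?_, ?_⟩
    · filter_upwards [hεcoe, hb] with ω h1 h2
      rw [h1]
      nlinarith
    · intro u hu
      rw [Set.mem_add] at hu
      obtain ⟨m', hm', c, hc, rfl⟩ := hu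
      have hc' : aabs c ≤ ε := hc
      refine ⟨m + m', add_mem hm hm', b + c, ?_, by abel⟩
      filter_upwards [hb, le_iff_ae.mp hc', aabs_coeFn c, hεcoe,
        MeasureTheory.AEEqFun.coeFn_add b c] with ω h1 h2 h3 h4 h5
      rw [h3, h4] at h2
      rw [h5, Pi.add_apply]
      have := abs_add_le (b ω) (c ω)
      linarith
  have h02 : (0 : Ω →ₘ[P] ℝ) ∈ V2 := by
    refine ⟨0, zero_mem _, 0, ?_, (add_zero 0).symm⟩
    filter_upwards [MeasureTheory.AEEqFun.coeFn_zero (β := ℝ) (μ := P)] with ω h1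
    rw [h1, Pi.zero_apply]
    norm_num
  obtain ⟨Qs, hQfin, hQsub, ε, hε, hu2⟩ := (hiff V2).mp hopen2 0 h02
  have h2mem : (0 : Ω →ₘ[P] ℝ) + ((1 : Ω →ₘ[P] ℝ) + 1) ∈ V2 := by
    refine hu2 _ (fun q hq => ?_)
    rw [hA0 q (hQsub hq)]
    exact zero_le_of_spos hε
  rw [zero_add] at h2mem
  obtain ⟨m, hm, b, hb, heq⟩ := h2mem
  rw [Finsupp.mem_span_range_iff_exists_finsupp] at hm
  obtain ⟨c, hc⟩ := hm
  obtain ⟨k, hk⟩ := Infinite.exists_notMem_finset c.support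
  have hkm : ind P (A k) * m = 0 := by
    rw [← hc, Finsupp.sum, Finset.mul_sum]
    apply Finset.sum_eq_zero
    intro i hi
    have hik : ind P (A k) * ind P (A i) = 0 := by
      refine ind_mul_ind (hAm k) (hAm i) (hAd ?_)
      rintro rfl
      exact hk hi
    rw [smul_eq_mul', mul_left_comm, hik, mul_zero]
  have heq2 : ind P (A k) * ((1 : Ω →ₘ[P] ℝ) + 1) = ind P (A k) * b := by
    rw [heq, mul_add, hkm, zero_add]
  have hbad : ∀ᵐ ω ∂P, ω ∉ A k := by
    have hcoe : ⇑(ind P (A k) * ((1 : Ω →ₘ[P] ℝ) + 1)) = ⇑(ind P (A k) * b) := by rw [heq2]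
    filter_upwards [MeasureTheory.AEEqFun.coeFn_mul (ind P (A k)) ((1 : Ω →ₘ[P] ℝ) + 1),
      MeasureTheory.AEEqFun.coeFn_mul (ind P (A k)) b, ind_coeFn (hAm k),
      MeasureTheory.AEEqFun.coeFn_add (1 : Ω →ₘ[P] ℝ) 1,
      MeasureTheory.AEEqFun.coeFn_one (β := ℝ) (μ := P), hb] with ω h1 h2 h3 h4 h5 h6
    intro hω
    have e := congrFun hcoe ω
    rw [h1, h2, Pi.mul_apply, Pi.mul_apply, h3, Set.indicator_of_mem hω, one_mul, one_mul] at e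
    rw [h4, Pi.add_apply, h5, Pi.one_apply] at e
    rw [← e] at h6
    norm_num at h6
  exact absurd (measure_eq_zero_iff_ae_notMem.mpr hbad) (hApos k).ne'
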